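/- Any C² solution ψ of the PDE ∂_kψ ∂_kψ ∂_{ij}ψ + ∂_kψ ∂_lψ ∂_{kl}ψ δ_{ij} = ∂_iψ ∂_{jk}ψ ∂_kψ + ∂_jψ ∂_{ik}ψ ∂_kψ on an open set of ℝ² is harmonic at every point where its gradient is nonzero: taking the trace of the equation in dimension n = 2 yields |∇ψ|² Δψ = 0, hence Δψ = 0 wherever ∇ψ ≠ 0. -/
import Mathlib


open Real

/-- First partial derivative `∂ᵢ f` on `ℝ²`. -/
noncomputable def pd (i : Fin 2) (f : (Fin 2 → ℝ) → ℝ) (x : Fin 2 → ℝ) : ℝ :=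
  fderiv ℝ f x (Pi.single i 1)

/-- Second partial derivative `∂ᵢ∂ⱼ f`. -/
noncomputable def pd2 (i j : Fin 2) (f : (Fin 2 → ℝ) → ℝ) (x : Fin 2 → ℝ) : ℝ :=
  pd i (pd j f) x

/-- A `C²` solution of the cubic PDE
`∂ₖψ∂ₖψ ∂ᵢⱼψ + ∂ₖψ∂ₗψ∂ₖₗψ δᵢⱼ = ∂ᵢψ ∂ⱼₖψ∂ₖψ + ∂ⱼψ ∂ᵢₖψ∂ₖψ`
on an open subset of `ℝ²` is harmonic at every point where its gradient does not vanish. -/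
theorem cubic_pde_implies_harmonic_in_dim_two
    (U : Set (Fin 2 → ℝ)) (hU : IsOpen U) (ψ : (Fin 2 → ℝ) → ℝ)
    (hreg : ContDiffOn ℝ 2 ψ U)
    (hpde : ∀ x ∈ U, ∀ i j : Fin 2,
      (∑ k, pd k ψ x * pd k ψ x) * pd2 i j ψ x
        + (∑ k, ∑ l, pd k ψ x * pd l ψ x * pd2 k l ψ x) * (if i = j then (1:ℝ) else 0)
      = pd i ψ x * (∑ k, pd2 j k ψ x * pd k ψ x)
        + pd j ψ x * (∑ k, pd2 i k ψ x * pd k ψ x)) :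
    ∀ x ∈ U, (∃ i : Fin 2, pd i ψ x ≠ 0) → pd2 0 0 ψ x + pd2 1 1 ψ x = 0 := by
  intro x hx ⟨i, hi⟩
  have h1 := hpde x hx 0 0
  have h2 := hpde x hx 1 1
  simp only [Fin.sum_univ_two, if_pos rfl, if_true] at h1 h2
  set a := pd 0 ψ x
  set b := pd 1 ψ x
  have hab : a * a + b * b > 0 := by
    fin_cases i
    · have ha : a ≠ 0 := hi
      nlinarith [mul_self_pos.mpr ha, mul_self_nonneg b]
    · have hb : b ≠ 0 := hi
      nlinarith [mul_self_pos.mpr hb, mul_self_nonneg a]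
  have key : (a * a + b * b) * (pd2 0 0 ψ x + pd2 1 1 ψ x) = 0 := by linear_combination h1 + h2
  have := mul_eq_zero.mp key
  rcases this with h | h
  · exact absurd h (ne_of_gt hab)
  · exact h
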